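/- Let (G, ℓ) be a small morphism-colored groupoid satisfying the inverse-color condition. If morphisms g, f₁, f₂ of G (with f₂'s target equal to f₁'s source) satisfy ℓ(g) ∼¹ ℓ(f₁ ∘ f₂), then there exist morphisms g₁, g₂ of G such that g = g₁ ∘ g₂, ℓ(g₁) ∼¹ ℓ(f₁), and ℓ(g₂) ∼¹ ℓ(f₂). (In other words, the quotiented coloring again makes G a morphism-colored category.) -/

import Mathlib

open CategoryTheory

universe v u

/-- The type of morphisms of a category, bundled with their endpoints. -/
abbrev Mor (C : Type u) [Category.{v} C] : Type (max u v) := Σ X Y : C, X ⟶ Y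

/-- `(C, ℓ)` is a morphism-colored category: whenever `ℓ g = ℓ (f₂ ≫ f₁)`,
the morphism `g` factors as `g₂ ≫ g₁` with matching colors. -/
def IsMCColoring {C : Type u} [Category.{v} C] {I : Type*} (ℓ : Mor C → I) : Prop :=
  ∀ {A B X Y Z : C} (g : A ⟶ B) (f₂ : X ⟶ Y) (f₁ : Y ⟶ Z),
    ℓ ⟨A, B, g⟩ = ℓ ⟨X, Z, f₂ ≫ f₁⟩ →
    ∃ (M : C) (g₂ : A ⟶ M) (g₁ : M ⟶ B),
      g = g₂ ≫ g₁ ∧ ℓ ⟨A, M, g₂⟩ = ℓ ⟨X, Y, f₂⟩ ∧ ℓ ⟨M, B, g₁⟩ = ℓ ⟨Y, Z, f₁⟩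

/-- The inverse-color condition on a morphism-colored groupoid. -/
def InvColorCond {G : Type u} [Groupoid.{v} G] {I : Type*} (ℓ : Mor G → I) : Prop :=
  ∀ {X Y X' Y' : G} (f : X ⟶ Y) (g : X' ⟶ Y'),
    ℓ ⟨X, Y, f⟩ = ℓ ⟨X', Y', g⟩ →
    ℓ ⟨Y, X, Groupoid.inv f⟩ = ℓ ⟨Y', X', Groupoid.inv g⟩

/-- A nonempty composable sequence of morphisms from `X` to `Y`. -/
inductive Chain (C : Type u) [Category.{v} C] : C → C → Type (max u v) where
  | single {X Y : C} (f : X ⟶ Y) : Chain C X Y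
  | cons {X Y Z : C} (f : X ⟶ Y) (rest : Chain C Y Z) : Chain C X Z

/-- The composite of a composable sequence of morphisms. -/
def Chain.comp {C : Type u} [Category.{v} C] : ∀ {X Y : C}, Chain C X Y → (X ⟶ Y)
  | _, _, .single f => f
  | _, _, .cons f rest => f ≫ rest.comp

/-- The list of colors of a composable sequence of morphisms. -/
def Chain.colors {C : Type u} [Category.{v} C] {I : Type*} (ℓ : Mor C → I) :
    ∀ {X Y : C}, Chain C X Y → List I
  | _, _, .single f => [ℓ ⟨_, _, f⟩]
  | _, _, .cons f rest => ℓ ⟨_, _, f⟩ :: rest.colors ℓ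

/-- The relation `∼¹` on colors: `a ∼¹ b` iff there are composable sequences
of morphisms, of the same length and with componentwise equal colors,
whose composites have colors `a` and `b` respectively. -/
def Sim1 {C : Type u} [Category.{v} C] {I : Type*} (ℓ : Mor C → I) (a b : I) : Prop :=
  ∃ (X Y X' Y' : C) (c : Chain C X Y) (c' : Chain C X' Y'),
    c.colors ℓ = c'.colors ℓ ∧ a = ℓ ⟨X, Y, c.comp⟩ ∧ b = ℓ ⟨X', Y', c'.comp⟩

/-- The color of the identity of an object. -/
def ell0 {C : Type u} [Category.{v} C] {I : Type*} (ℓ : Mor C → I) (x : C) : I :=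
  ℓ ⟨x, x, 𝟙 x⟩

/-- The relation `∼⁰` on identity colors. -/
def Sim0 {C : Type u} [Category.{v} C] {I : Type*} (ℓ : Mor C → I) (a b : I) : Prop :=
  ∃ (X Y X' Y' : C) (f : X ⟶ Y) (g : X' ⟶ Y'),
    Sim1 ℓ (ℓ ⟨X, Y, f⟩) (ℓ ⟨X', Y', g⟩) ∧ a = ell0 ℓ X ∧ b = ell0 ℓ X'

/-- A functor is color-constant if it sends morphisms of equal color to equal morphisms. -/
def ColorConstant {C : Type u} [Category.{v} C] {D : Type*} [Category D] {I : Type*}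
    (ℓ : Mor C → I) (F : C ⥤ D) : Prop :=
  ∀ {X Y X' Y' : C} (f : X ⟶ Y) (g : X' ⟶ Y'),
    ℓ ⟨X, Y, f⟩ = ℓ ⟨X', Y', g⟩ →
    (⟨F.obj X, F.obj Y, F.map f⟩ : Mor D) = ⟨F.obj X', F.obj Y', F.map g⟩

section Aux

variable {C : Type u} [Category.{v} C] {I : Type*}

/-- Append a morphism at the end of a chain. -/
def Chain.snoc : ∀ {X Y Z : C}, Chain C X Y → (Y ⟶ Z) → Chain C X Z
  | _, _, _, .single f, w => .cons f (.single w)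
  | _, _, _, .cons f rest, w => .cons f (rest.snoc w)

theorem Chain.comp_snoc : ∀ {X Y Z : C} (c : Chain C X Y) (w : Y ⟶ Z),
    (c.snoc w).comp = c.comp ≫ w
  | _, _, _, .single f, w => rfl
  | _, _, _, .cons f rest, w => by
      simp [Chain.snoc, Chain.comp, Chain.comp_snoc rest w]

theorem Chain.colors_snoc (ℓ : Mor C → I) : ∀ {X Y Z : C} (c : Chain C X Y) (w : Y ⟶ Z),
    (c.snoc w).colors ℓ = c.colors ℓ ++ [ℓ ⟨Y, Z, w⟩]
  | _, _, _, .single f, w => rfl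
  | _, _, _, .cons f rest, w => by
      simp [Chain.snoc, Chain.colors, Chain.colors_snoc ℓ rest w]

/-- The color of the last morphism of a chain. -/
def Chain.lastColor (ℓ : Mor C → I) : ∀ {X Y : C}, Chain C X Y → I
  | _, _, .single f => ℓ ⟨_, _, f⟩
  | _, _, .cons _ rest => rest.lastColor ℓ

theorem Chain.getLast?_colors (ℓ : Mor C → I) : ∀ {X Y : C} (c : Chain C X Y),
    (c.colors ℓ).getLast? = some (c.lastColor ℓ)
  | _, _, .single f => rfl
  | _, _, .cons f rest => by
      have h := Chain.getLast?_colors ℓ rest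
      have hne : rest.colors ℓ ≠ [] := by cases rest <;> simp [Chain.colors]
      obtain ⟨y, l', hl⟩ := List.exists_cons_of_ne_nil hne
      simp only [Chain.colors, Chain.lastColor, hl] at *
      rw [List.getLast?_cons_cons, h]

/-- Equal color lists give equal last colors. -/
theorem Chain.lastColor_eq_of_colors_eq (ℓ : Mor C → I) {X Y X' Y' : C}
    (c : Chain C X Y) (c' : Chain C X' Y') (h : c.colors ℓ = c'.colors ℓ) :
    c.lastColor ℓ = c'.lastColor ℓ := by
  have := (Chain.getLast?_colors ℓ c).symm.trans
    (h ▸ Chain.getLast?_colors ℓ c')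
  exact Option.some.inj this

/-- Some morphism ending at the chain's target realizes the last color. -/
theorem Chain.exists_last (ℓ : Mor C → I) : ∀ {X Y : C} (c : Chain C X Y),
    ∃ (P : C) (u : P ⟶ Y), ℓ ⟨P, Y, u⟩ = c.lastColor ℓ
  | _, _, .single f => ⟨_, f, rfl⟩
  | _, _, .cons f rest => Chain.exists_last ℓ rest

/-- A morphism whose color equals the color of a chain's composite factors
as a chain with the same color list. -/
theorem Chain.factor (ℓ : Mor C → I) (hℓ : IsMCColoring ℓ) :
    ∀ {X Y : C} (c : Chain C X Y) {A B : C} (g : A ⟶ B),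
      ℓ ⟨A, B, g⟩ = ℓ ⟨X, Y, c.comp⟩ →
      ∃ d : Chain C A B, d.comp = g ∧ d.colors ℓ = c.colors ℓ
  | _, _, .single f, A, B, g, h => ⟨.single g, rfl, by simpa [Chain.colors, Chain.comp] using h⟩
  | _, _, .cons f rest, A, B, g, h => by
      obtain ⟨M, g₂, g₁, hfac, h₂, h₁⟩ := hℓ g f rest.comp (by simpa [Chain.comp] using h)
      obtain ⟨d, hd, hdc⟩ := Chain.factor ℓ hℓ rest g₁ h₁
      exact ⟨.cons g₂ d, by simp [Chain.comp, hd, hfac], by simp [Chain.colors, hdc, h₂]⟩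

end Aux

/-- The coloring quotiented by `∼¹` again makes `G` a
morphism-colored category. -/
theorem stmt4 {G : Type u} [Groupoid.{v} G] {I : Type*} (ℓ : Mor G → I)
    (hℓ : IsMCColoring ℓ) (hinv : InvColorCond ℓ)
    {A B X Y Z : G} (g : A ⟶ B) (f₂ : X ⟶ Y) (f₁ : Y ⟶ Z)
    (hg : Sim1 ℓ (ℓ ⟨A, B, g⟩) (ℓ ⟨X, Z, f₂ ≫ f₁⟩)) :
    ∃ (M : G) (g₂ : A ⟶ M) (g₁ : M ⟶ B),
      g = g₂ ≫ g₁ ∧ Sim1 ℓ (ℓ ⟨A, M, g₂⟩) (ℓ ⟨X, Y, f₂⟩) ∧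
        Sim1 ℓ (ℓ ⟨M, B, g₁⟩) (ℓ ⟨Y, Z, f₁⟩) := by
  obtain ⟨X₀, Y₀, X₀', Y₀', c, c', hcc, hgc, hfc⟩ := hg
  -- factor `g` along the chain `c`
  obtain ⟨d, hdcomp, hdcolors⟩ := Chain.factor ℓ hℓ c g hgc
  -- factor `c'.comp` matching `(f₂, f₁)`
  obtain ⟨M', h₂, h₁, hfac', hh₂, hh₁⟩ := hℓ c'.comp f₂ f₁ hfc.symm
  -- a morphism `u : P ⟶ B` realizing the last color of `d` (= last color of `c'`)
  obtain ⟨P, u, hu⟩ := Chain.exists_last ℓ d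
  obtain ⟨P', t, ht⟩ := Chain.exists_last ℓ c'
  have hut : ℓ ⟨P, B, u⟩ = ℓ ⟨P', Y₀', t⟩ := by
    rw [hu, ht, Chain.lastColor_eq_of_colors_eq ℓ d c' (hdcolors.trans hcc)]
  -- factor `u` against `t = (t ≫ inv h₁) ≫ h₁` to get `u₁ : N ⟶ B` with `ℓ u₁ = ℓ h₁`
  have hteq : ℓ ⟨P, B, u⟩ = ℓ ⟨P', Y₀', (t ≫ Groupoid.inv h₁) ≫ h₁⟩ := by
    simpa [Category.assoc, Groupoid.inv_comp] using hut
  obtain ⟨N, u₂, u₁, hufac, hu₂, hu₁⟩ := hℓ u (t ≫ Groupoid.inv h₁) h₁ hteq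
  refine ⟨N, g ≫ Groupoid.inv u₁, u₁, by simp, ?_, ?_⟩
  · -- Sim1 for g₂ := g ≫ inv u₁ against f₂, via snoc-ed chains
    refine ⟨A, N, X₀', M', d.snoc (Groupoid.inv u₁), c'.snoc (Groupoid.inv h₁), ?_, ?_, ?_⟩
    · rw [Chain.colors_snoc, Chain.colors_snoc, hdcolors, hcc]
      have : ℓ ⟨B, N, Groupoid.inv u₁⟩ = ℓ ⟨Y₀', M', Groupoid.inv h₁⟩ :=
        hinv u₁ h₁ hu₁
      rw [this]
    · rw [Chain.comp_snoc, hdcomp]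
    · rw [Chain.comp_snoc, hfac']
      have : (h₂ ≫ h₁) ≫ Groupoid.inv h₁ = h₂ := by
        simp [Category.assoc, Groupoid.comp_inv]
      rw [this, hh₂]
  · -- Sim1 for g₁ := u₁ against f₁, via single chains
    exact ⟨N, B, Y, Z, .single u₁, .single f₁, by
      simp [Chain.colors, hu₁, hh₁], rfl, rfl⟩
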